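/- Let G be a multi r-edge-colored complete graph on n vertices with r ≥ 3, transitive coloring, such that each color i has exactly k_i monochromatic components with 2 ≤ k_i ≤ r − 1 for all i. Then Σ_{i=1}^r m_i ≤ r(r−2)n²/(2(r−1)²), where m_i is the number of edges whose color set is exactly {i}. -/
import Mathlib

open Finset

/-- For an equivalence relation `R` on a fintype, `n² ≤ (#classes) * (N + n)` where
`N` counts ordered pairs of distinct related elements. -/
lemma cls_ineq {V : Type*} [Fintype V] [DecidableEq V] (R : V → V → Prop) [DecidableRel R]
    (hrefl : ∀ v, R v v) (hsym : ∀ u v, R u v → R v u)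
    (htr : ∀ u v w, R u v → R v w → R u w) :
    (Fintype.card V) ^ 2 ≤
      (Finset.univ.image (fun v => Finset.univ.filter (fun u => R u v))).card *
        ((Finset.univ.filter (fun p : V × V => p.1 ≠ p.2 ∧ R p.1 p.2)).card + Fintype.card V) := by
  set cls : V → Finset V := fun v => Finset.univ.filter (fun u => R u v) with hcls
  have hmem : ∀ u v, u ∈ cls v ↔ R u v := by intro u v; simp [hcls]
  have hclseq : ∀ u v, R u v → cls u = cls v := by
    intro u v h
    ext w
    simp only [hmem]
    exact ⟨fun hw => htr w u v hw h, fun hw => htr w v u hw (hsym u v h)⟩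
  have hfiber : ∀ w, Finset.univ.filter (fun v => cls v = cls w) = cls w := by
    intro w
    ext v
    simp only [Finset.mem_filter, Finset.mem_univ, true_and, hmem]
    constructor
    · intro h
      have hv : v ∈ cls w := h ▸ (hmem v v).mpr (hrefl v)
      exact (hmem v w).mp hv
    · intro h; exact hclseq v w h
  set F := Finset.univ.image cls with hF
  have hn : Fintype.card V = ∑ C ∈ F, C.card := by
    rw [← Finset.card_univ,
      Finset.card_eq_sum_card_fiberwise (f := cls) (t := F)
        (fun v _ => Finset.mem_image_of_mem cls (Finset.mem_univ v))]
    refine Finset.sum_congr rfl ?_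
    intro C hC
    obtain ⟨w, -, rfl⟩ := Finset.mem_image.mp hC
    rw [hfiber w]
  have hsum2 : ∑ v, (cls v).card = ∑ C ∈ F, C.card ^ 2 := by
    rw [Finset.sum_comp (fun C : Finset V => C.card) cls]
    refine Finset.sum_congr rfl ?_
    intro C hC
    obtain ⟨w, -, rfl⟩ := Finset.mem_image.mp hC
    rw [hfiber w, smul_eq_mul, sq]
  have hN : (Finset.univ.filter (fun p : V × V => p.1 ≠ p.2 ∧ R p.1 p.2)).card + Fintype.card V
      = ∑ v, (cls v).card := by
    have h1 : ∀ u : V, (∑ v, if u ≠ v ∧ R u v then 1 else 0) + 1 = (cls u).card := by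
      intro u
      have he : ((cls u).erase u).card + 1 = (cls u).card :=
        Finset.card_erase_add_one ((hmem u u).mpr (hrefl u))
      rw [← he]
      congr 1
      have : (cls u).erase u = Finset.univ.filter (fun v => u ≠ v ∧ R u v) := by
        ext v
        simp only [Finset.mem_erase, hmem, Finset.mem_filter, Finset.mem_univ, true_and]
        constructor
        · rintro ⟨h1, h2⟩; exact ⟨Ne.symm h1, hsym v u h2⟩
        · rintro ⟨h1, h2⟩; exact ⟨Ne.symm h1, hsym u v h2⟩
      rw [this, Finset.card_filter]
    rw [Finset.card_filter, Fintype.sum_prod_type, ← Finset.card_univ,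
      Finset.card_eq_sum_ones (Finset.univ : Finset V), ← Finset.sum_add_distrib]
    exact Finset.sum_congr rfl fun u _ => h1 u
  calc (Fintype.card V) ^ 2 = (∑ C ∈ F, C.card) ^ 2 := by rw [hn]
    _ ≤ F.card * ∑ C ∈ F, C.card ^ 2 := sq_sum_le_card_mul_sum_sq
    _ = F.card * ((Finset.univ.filter (fun p : V × V => p.1 ≠ p.2 ∧ R p.1 p.2)).card
          + Fintype.card V) := by rw [hN, hsum2]

/-- Multi r-edge-colored complete graph on n vertices, r ≥ 3, each
color i having exactly k_i monochromatic components with 2 ≤ k_i ≤ r − 1. Then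
Σ_i m_i ≤ r(r−2)n²/(2(r−1)²), where m_i is the number of edges with color set
exactly {i}. (Counting ordered pairs doubles both sides.) -/
theorem stmt_10 {V : Type*} [Fintype V] [DecidableEq V] (r : ℕ) (hr : 3 ≤ r)
    (col : V → V → Finset (Fin r))
    (hsymm : ∀ u v : V, col u v = col v u)
    (hne : ∀ u v : V, u ≠ v → (col u v).Nonempty)
    (htrans : ∀ u v w : V, ∀ i : Fin r,
      i ∈ col u v → i ∈ col v w → u ≠ w → i ∈ col u w)
    (k : Fin r → ℕ)
    (hk : ∀ i : Fin r,
      Set.ncard {C : Set V | ∃ v : V, C = {u : V | u = v ∨ i ∈ col u v}} = k i)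
    (hk2 : ∀ i : Fin r, 2 ≤ k i) (hk3 : ∀ i : Fin r, k i ≤ r - 1) :
    ∑ i : Fin r,
        (Set.ncard {p : V × V | p.1 ≠ p.2 ∧ col p.1 p.2 = {i}} : ℝ) ≤
      (r : ℝ) * ((r : ℝ) - 2) * (Fintype.card V : ℝ) ^ 2 / ((r : ℝ) - 1) ^ 2 := by
  set n := Fintype.card V with hn
  -- per-color inequality
  have key : ∀ i : Fin r, n ^ 2 ≤ (r - 1) *
      ((Finset.univ.filter (fun p : V × V => p.1 ≠ p.2 ∧ i ∈ col p.1 p.2)).card + n) := by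
    intro i
    set R : V → V → Prop := fun u v => u = v ∨ i ∈ col u v with hR
    have hrefl : ∀ v, R v v := fun v => Or.inl rfl
    have hsym : ∀ u v, R u v → R v u := by
      rintro u v (rfl | h)
      · exact Or.inl rfl
      · exact Or.inr (by rwa [hsymm])
    have htr : ∀ u v w, R u v → R v w → R u w := by
      rintro u v w (rfl | h1) h2
      · exact h2
      · rcases h2 with rfl | h2
        · exact Or.inr h1
        · by_cases huw : u = w
          · exact Or.inl huw
          · exact Or.inr (htrans u v w i h1 h2 huw)
    have hineq := cls_ineq R hrefl hsym htr
    have hFk : (Finset.univ.image (fun v => Finset.univ.filter (fun u => R u v))).card = k i := by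
      rw [← hk i]
      have hset : {C : Set V | ∃ v : V, C = {u : V | u = v ∨ i ∈ col u v}}
          = (fun s : Finset V => (↑s : Set V)) ''
            ↑(Finset.univ.image (fun v => Finset.univ.filter (fun u => R u v))) := by
        ext C
        simp only [Set.mem_setOf_eq, Set.mem_image, Finset.mem_coe, Finset.mem_image,
          Finset.mem_univ, true_and]
        constructor
        · rintro ⟨v, rfl⟩
          refine ⟨Finset.univ.filter (fun u => R u v), ⟨v, rfl⟩, ?_⟩
          ext u; simp [hR]
        · rintro ⟨s, ⟨v, rfl⟩, rfl⟩
          refine ⟨v, ?_⟩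
          ext u; simp [hR]
      rw [hset, Set.ncard_image_of_injective _ Finset.coe_injective, Set.ncard_coe_finset]
    have hfilt : (Finset.univ.filter (fun p : V × V => p.1 ≠ p.2 ∧ R p.1 p.2))
        = (Finset.univ.filter (fun p : V × V => p.1 ≠ p.2 ∧ i ∈ col p.1 p.2)) := by
      ext p
      simp only [Finset.mem_filter, Finset.mem_univ, true_and, hR]
      constructor
      · rintro ⟨h1, heq | h2⟩
        · exact absurd heq h1
        · exact ⟨h1, h2⟩
      · rintro ⟨h1, h2⟩; exact ⟨h1, Or.inr h2⟩
    rw [hfilt, hFk] at hineq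
    exact hineq.trans (Nat.mul_le_mul_right _ (hk3 i))
  -- notation for counts
  set T := ∑ i : Fin r,
      (Finset.univ.filter (fun p : V × V => p.1 ≠ p.2 ∧ i ∈ col p.1 p.2)).card with hT
  set S := ∑ i : Fin r,
      (Finset.univ.filter (fun p : V × V => p.1 ≠ p.2 ∧ col p.1 p.2 = {i})).card with hS
  set P := (Finset.univ.filter (fun p : V × V => p.1 ≠ p.2)).card with hP
  -- P = n² - n, i.e. P + n = n²
  have hPn : P + n = n ^ 2 := by
    have : (Finset.univ.filter (fun p : V × V => p.1 ≠ p.2))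
        = (Finset.univ : Finset V).offDiag := by
      ext p; simp [Finset.mem_offDiag]
    have hcard : P = n * n - n := by rw [hP, this, Finset.offDiag_card, Finset.card_univ]
    have hle : n ≤ n * n := Nat.le_mul_of_pos_left n (Nat.lt_of_lt_of_le Nat.zero_lt_one
      (Nat.one_le_iff_ne_zero.mpr (by
        rintro h0
        have : (Finset.univ : Finset V).offDiag.card = 0 := by
          simp [Finset.offDiag_card, Finset.card_univ, ← hn, h0]
        -- n = 0 contradicts k i ≥ 2
        have hk0 := hk ⟨0, by omega⟩
        have : IsEmpty V := by
          rw [hn] at h0; exact Fintype.card_eq_zero_iff.mp h0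
        have hempty : {C : Set V | ∃ v : V, C = {u : V | u = v ∨
            (⟨0, by omega⟩ : Fin r) ∈ col u v}} = ∅ := by
          ext C; simp only [Set.mem_setOf_eq, Set.mem_empty_iff_false, iff_false]
          rintro ⟨v, -⟩; exact this.elim v
        rw [hempty, Set.ncard_empty] at hk0
        have := hk2 ⟨0, by omega⟩
        omega)))
    rw [hcard, sq]
    omega
  -- global counting inequality T + (r-1)*S ≤ r * P
  have hcount : T + (r - 1) * S ≤ r * P := by
    have hTsum : T = ∑ p : V × V,
        (if p.1 ≠ p.2 then (col p.1 p.2).card else 0) := by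
      rw [hT]
      simp_rw [Finset.card_filter]
      rw [Finset.sum_comm]
      refine Finset.sum_congr rfl fun p _ => ?_
      by_cases h : p.1 ≠ p.2
      · simp only [eq_true h, true_and, if_true]
        rw [← Finset.card_filter]
        congr 1
        exact Finset.filter_univ_mem _
      · rw [not_ne_iff] at h
        simp [h]
    have hSsum : S = ∑ p : V × V,
        (if p.1 ≠ p.2 then (∑ i : Fin r, if col p.1 p.2 = {i} then 1 else 0) else 0) := by
      rw [hS]
      simp_rw [Finset.card_filter]
      rw [Finset.sum_comm]
      refine Finset.sum_congr rfl fun p _ => ?_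
      by_cases h : p.1 ≠ p.2
      · simp only [eq_true h, true_and, if_true]
      · rw [not_ne_iff] at h
        simp [h]
    have hPsum : P = ∑ p : V × V, (if p.1 ≠ p.2 then 1 else 0) := by
      rw [hP, Finset.card_filter]
    rw [hTsum, hSsum, hPsum, Finset.mul_sum, Finset.mul_sum, ← Finset.sum_add_distrib]
    refine Finset.sum_le_sum fun p _ => ?_
    by_cases h : p.1 ≠ p.2
    · simp only [eq_true h, if_true]
      by_cases h1 : ∃ j : Fin r, col p.1 p.2 = {j}
      · obtain ⟨j, hj⟩ := h1
        have hs : (∑ i : Fin r, if col p.1 p.2 = {i} then 1 else 0) = 1 := by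
          rw [hj]
          simp only [Finset.singleton_inj]
          simp [Finset.sum_ite_eq]
        rw [hs, hj, Finset.card_singleton, mul_one]
        omega
      · have hs : (∑ i : Fin r, if col p.1 p.2 = {i} then 1 else 0) = 0 := by
          refine Finset.sum_eq_zero fun i _ => ?_
          simp only [ite_eq_right_iff]
          intro hcontra; exact absurd ⟨i, hcontra⟩ h1
        rw [hs, mul_zero, add_zero, mul_one]
        calc (col p.1 p.2).card ≤ (Finset.univ : Finset (Fin r)).card :=
              Finset.card_le_univ _
          _ = r := by simp
    · rw [not_ne_iff] at h
      simp [h]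
  -- sum the per-color inequality
  have hkey : r * n ^ 2 ≤ (r - 1) * (T + r * n) := by
    calc r * n ^ 2 = ∑ _i : Fin r, n ^ 2 := by simp [mul_comm]
      _ ≤ ∑ i : Fin r, (r - 1) *
          ((Finset.univ.filter (fun p : V × V => p.1 ≠ p.2 ∧ i ∈ col p.1 p.2)).card + n) :=
        Finset.sum_le_sum fun i _ => key i
      _ = (r - 1) * (T + r * n) := by
        rw [← Finset.mul_sum, Finset.sum_add_distrib, ← hT]
        simp [mul_comm]
  -- pass to the reals
  have hrcast : ((r - 1 : ℕ) : ℝ) = (r : ℝ) - 1 := by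
    rw [Nat.cast_sub (by omega)]; simp
  have h1 : (r : ℝ) * (n : ℝ) ^ 2 ≤ ((r : ℝ) - 1) * ((T : ℝ) + (r : ℝ) * (n : ℝ)) := by
    have := hkey
    calc (r : ℝ) * (n : ℝ) ^ 2 = ((r * n ^ 2 : ℕ) : ℝ) := by push_cast; ring
      _ ≤ (((r - 1) * (T + r * n) : ℕ) : ℝ) := Nat.cast_le.mpr hkey
      _ = ((r : ℝ) - 1) * ((T : ℝ) + (r : ℝ) * (n : ℝ)) := by
        push_cast [hrcast]; ring
  have h2 : (T : ℝ) + ((r : ℝ) - 1) * (S : ℝ) ≤ (r : ℝ) * (P : ℝ) := by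
    calc (T : ℝ) + ((r : ℝ) - 1) * (S : ℝ) = ((T + (r - 1) * S : ℕ) : ℝ) := by
          push_cast [hrcast]; ring
      _ ≤ ((r * P : ℕ) : ℝ) := Nat.cast_le.mpr hcount
      _ = (r : ℝ) * (P : ℝ) := by push_cast; ring
  have h3 : (P : ℝ) + (n : ℝ) = (n : ℝ) ^ 2 := by
    calc (P : ℝ) + (n : ℝ) = ((P + n : ℕ) : ℝ) := by push_cast; ring
      _ = (n : ℝ) ^ 2 := by rw [hPn]; push_cast; ring
  -- rewrite the goal sum as S
  have hgoal : ∑ i : Fin r,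
      (Set.ncard {p : V × V | p.1 ≠ p.2 ∧ col p.1 p.2 = {i}} : ℝ) = (S : ℝ) := by
    rw [hS]
    push_cast
    refine Finset.sum_congr rfl fun i _ => ?_
    congr 1
    have : {p : V × V | p.1 ≠ p.2 ∧ col p.1 p.2 = {i}}
        = ↑(Finset.univ.filter (fun p : V × V => p.1 ≠ p.2 ∧ col p.1 p.2 = {i})) := by
      ext p; simp
    rw [this, Set.ncard_coe_finset]
  rw [hgoal]
  have hr1 : (0 : ℝ) < (r : ℝ) - 1 := by
    have : (3 : ℝ) ≤ (r : ℝ) := by exact_mod_cast hr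
    linarith
  have hsq : (0 : ℝ) < ((r : ℝ) - 1) ^ 2 := by positivity
  rw [le_div_iff₀ hsq]
  have hP3 : (P : ℝ) = (n : ℝ) ^ 2 - (n : ℝ) := by linarith
  have h2' : (T : ℝ) + ((r : ℝ) - 1) * (S : ℝ) ≤ (r : ℝ) * ((n : ℝ) ^ 2 - (n : ℝ)) := by
    rw [← hP3]; exact h2
  nlinarith [mul_le_mul_of_nonneg_left h2' (le_of_lt hr1), h1]
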